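/- Let (Ω, F, P) be a probability space with Ω nonempty, X : Ω → ℝ a bounded measurable function, and β ∈ (0,1). Then the total variation distance-based risk measure satisfies TVD_β(X) := sup{∫ X dQ : Q a probability measure on (Ω, F) with (1/2)·‖P − Q‖_TV ≤ 1 − β} = (1 − β)·sup_{ω ∈ Ω} X(ω) + β·CVaR_β(X), where ‖P − Q‖_TV denotes the total variation norm of the signed measure P − Q. -/

import Mathlib

open MeasureTheory

/-- Conditional Value-at-Risk at level `β`: `CVaR_β(X) := inf_z E[z + (X - z)⁺ / β]`. -/
noncomputable def CVaR {Ω : Type*} [MeasurableSpace Ω] (P : Measure Ω) (β : ℝ) (X : Ω → ℝ) : ℝ :=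
  ⨅ z : ℝ, (z + (∫ ω, max (X ω - z) 0 ∂P) / β)

/-- Total variation distance between two finite measures:
`d_TV(P,Q) = (1/2) ‖P - Q‖`, half the total variation norm of the signed measure `P - Q`. -/
noncomputable def tvDist {Ω : Type*} [MeasurableSpace Ω]
    (P Q : Measure Ω) [IsFiniteMeasure P] [IsFiniteMeasure Q] : ℝ :=
  (1 / 2) * ((P.toSignedMeasure - Q.toSignedMeasure).totalVariation Set.univ).toReal

section Helpers

open scoped ENNReal

variable {Ω : Type*} [MeasurableSpace Ω]

lemma bdd_integrable {μ : Measure Ω} [IsFiniteMeasure μ] {f : Ω → ℝ} (hf : Measurable f)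
    {C : ℝ} (h : ∀ ω, |f ω| ≤ C) : Integrable f μ :=
  ⟨hf.aestronglyMeasurable, HasFiniteIntegral.of_bounded (C := C)
    (Filter.Eventually.of_forall fun ω => by simpa using h ω)⟩

lemma max_integrable {μ : Measure Ω} [IsFiniteMeasure μ] {X : Ω → ℝ} (hX : Measurable X)
    {C : ℝ} (hC : ∀ ω, |X ω| ≤ C) (z : ℝ) : Integrable (fun ω => max (X ω - z) 0) μ :=
  bdd_integrable ((hX.sub measurable_const).max measurable_const) (C := C + |z|)
    (fun ω => by
      rw [abs_le]
      constructor
      · have : (0:ℝ) ≤ max (X ω - z) 0 := le_max_right _ _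
        have : 0 ≤ C := (abs_nonneg _).trans (hC ω)
        have : 0 ≤ |z| := abs_nonneg z
        linarith
      · rcases le_total (X ω - z) 0 with h | h
        · rw [max_eq_right h]
          have : 0 ≤ C := (abs_nonneg _).trans (hC ω)
          have : 0 ≤ |z| := abs_nonneg z
          linarith
        · rw [max_eq_left h]
          have h1 := (abs_le.1 (hC ω)).2
          have h2 := neg_abs_le z
          linarith)

lemma sm_apply_jordan (s : SignedMeasure Ω) {E : Set Ω} (hE : MeasurableSet E) :
    s E = (s.toJordanDecomposition.posPart E).toReal
        - (s.toJordanDecomposition.negPart E).toReal := by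
  conv_lhs => rw [← s.toSignedMeasure_toJordanDecomposition]
  rw [JordanDecomposition.toSignedMeasure, VectorMeasure.sub_apply,
    Measure.toSignedMeasure_apply_measurable hE, Measure.toSignedMeasure_apply_measurable hE]
  rfl

lemma jordan_bound (μ ν : Measure Ω) [IsFiniteMeasure μ] [IsFiniteMeasure ν] :
    (((μ.toSignedMeasure - ν.toSignedMeasure).totalVariation Set.univ)).toReal
      ≤ (μ Set.univ).toReal + (ν Set.univ).toReal := by
  set s := μ.toSignedMeasure - ν.toSignedMeasure with hs
  obtain ⟨i, hi₁, hi₂, hi₃, hpos, hneg⟩ := s.toJordanDecomposition_spec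
  have happ : ∀ E : Set Ω, MeasurableSet E → s E = (μ E).toReal - (ν E).toReal := by
    intro E hE
    rw [hs, VectorMeasure.sub_apply, Measure.toSignedMeasure_apply_measurable hE,
      Measure.toSignedMeasure_apply_measurable hE]
    rfl
  have hTV : s.totalVariation Set.univ
      = s.toJordanDecomposition.posPart Set.univ + s.toJordanDecomposition.negPart Set.univ := by
    rw [SignedMeasure.totalVariation, Measure.add_apply]
  have hp : (s.toJordanDecomposition.posPart Set.univ).toReal = s i := by
    rw [hpos, SignedMeasure.toMeasureOfZeroLE_apply _ _ _ MeasurableSet.univ]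
    simp [Set.inter_univ]
  have hn : (s.toJordanDecomposition.negPart Set.univ).toReal = -s iᶜ := by
    rw [hneg, SignedMeasure.toMeasureOfLEZero_apply _ _ _ MeasurableSet.univ]
    simp [Set.inter_univ]
  have h1 : s i ≤ (μ Set.univ).toReal := by
    rw [happ i hi₁]
    have := ENNReal.toReal_mono (measure_ne_top μ _) (measure_mono (Set.subset_univ i))
    have := ENNReal.toReal_nonneg (a := ν i)
    linarith
  have h2 : -s iᶜ ≤ (ν Set.univ).toReal := by
    rw [happ iᶜ hi₁.compl]
    have := ENNReal.toReal_mono (measure_ne_top ν _) (measure_mono (Set.subset_univ iᶜ))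
    have := ENNReal.toReal_nonneg (a := μ iᶜ)
    linarith
  rw [hTV, ENNReal.toReal_add (measure_ne_top _ _) (measure_ne_top _ _), hp, hn]
  linarith

/-- For probability measures, `∫ f dQ ≤ ∫ f dP + b * tvDist P Q` for measurable `0 ≤ f ≤ b`. -/
lemma integral_le_add_tv (P Q : Measure Ω) [IsProbabilityMeasure P] [IsProbabilityMeasure Q]
    {f : Ω → ℝ} (hf : Measurable f) {b : ℝ} (hb0 : 0 ≤ b)
    (hf0 : ∀ ω, 0 ≤ f ω) (hfb : ∀ ω, f ω ≤ b) :
    ∫ ω, f ω ∂Q ≤ ∫ ω, f ω ∂P + b * tvDist P Q := by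
  set s := Q.toSignedMeasure - P.toSignedMeasure with hs
  set μp := s.toJordanDecomposition.posPart with hμp
  set μn := s.toJordanDecomposition.negPart with hμn
  have hsapp : ∀ E : Set Ω, MeasurableSet E →
      (Q E).toReal - (P E).toReal = (μp E).toReal - (μn E).toReal := by
    intro E hE
    have := sm_apply_jordan s hE
    rw [hs, VectorMeasure.sub_apply, Measure.toSignedMeasure_apply_measurable hE,
      Measure.toSignedMeasure_apply_measurable hE] at this
    exact this
  have hQle : Q ≤ P + μp := by
    rw [Measure.le_iff]
    intro E hE
    have h1 := hsapp E hE
    have hfinQ : Q E ≠ ⊤ := measure_ne_top _ _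
    have hfinP : P E ≠ ⊤ := measure_ne_top _ _
    have hfinp : μp E ≠ ⊤ := measure_ne_top _ _
    have : (Q E).toReal ≤ (P E).toReal + (μp E).toReal := by
      have := ENNReal.toReal_nonneg (a := μn E); linarith
    rw [Measure.add_apply]
    rw [← ENNReal.toReal_le_toReal hfinQ (by simp [ENNReal.add_ne_top, hfinP, hfinp]),
      ENNReal.toReal_add hfinP hfinp]
    exact this
  haveI : IsFiniteMeasure μp := s.toJordanDecomposition.posPart_finite
  haveI : IsFiniteMeasure μn := s.toJordanDecomposition.negPart_finite
  have hpn : (μp Set.univ).toReal = (μn Set.univ).toReal := by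
    have := hsapp Set.univ MeasurableSet.univ
    simp only [measure_univ, ENNReal.toReal_one, sub_self] at this
    linarith
  have htv : (μp Set.univ).toReal = tvDist P Q := by
    unfold tvDist
    have hneg : (P.toSignedMeasure - Q.toSignedMeasure) = -s := by rw [hs]; abel
    rw [hneg, SignedMeasure.totalVariation_neg, SignedMeasure.totalVariation,
      Measure.add_apply, ENNReal.toReal_add (measure_ne_top _ _) (measure_ne_top _ _), ← hμp,
      ← hμn, ← hpn]
    ring
  have habs : ∀ ω, |f ω| ≤ b := fun ω => abs_le.2 ⟨by linarith [hf0 ω], hfb ω⟩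
  have hint1 : Integrable f (P + μp) := bdd_integrable hf habs
  have step1 : ∫ ω, f ω ∂Q ≤ ∫ ω, f ω ∂(P + μp) :=
    integral_mono_measure hQle (Filter.Eventually.of_forall hf0) hint1
  have step2 : ∫ ω, f ω ∂(P + μp) = ∫ ω, f ω ∂P + ∫ ω, f ω ∂μp :=
    integral_add_measure (bdd_integrable hf habs) (bdd_integrable hf habs)
  have step3 : ∫ ω, f ω ∂μp ≤ b * (μp Set.univ).toReal := by
    calc ∫ ω, f ω ∂μp ≤ ∫ _, b ∂μp :=
          integral_mono (bdd_integrable hf habs) (integrable_const b)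
            (fun ω => hfb ω)
      _ = (μp Set.univ).toReal • b := by rw [integral_const]; rfl
      _ = b * (μp Set.univ).toReal := by rw [smul_eq_mul]; ring
  rw [htv] at step3
  linarith

end Helpers

section Quantile
variable {Ω : Type*} [MeasurableSpace Ω]

/-- existence of a `β`-quantile -/
lemma exists_quantile (P : Measure Ω) [IsProbabilityMeasure P]
    {X : Ω → ℝ} (hX : Measurable X) {C : ℝ} (hC : ∀ ω, |X ω| ≤ C)
    {β : ℝ} (hβ : β ∈ Set.Ioo (0:ℝ) 1) :
    ∃ z : ℝ, P {ω | z < X ω} ≤ ENNReal.ofReal β ∧ ENNReal.ofReal β ≤ P {ω | z ≤ X ω} := by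
  set S : Set ℝ := {z | P {ω | z < X ω} ≤ ENNReal.ofReal β} with hS
  have hCmem : C ∈ S := by
    have : {ω | C < X ω} = ∅ := by
      ext ω; simp only [Set.mem_setOf_eq, Set.mem_empty_iff_false, iff_false, not_lt]
      exact (abs_le.1 (hC ω)).2
    simp [hS, this]
  have hSne : S.Nonempty := ⟨C, hCmem⟩
  have hβlt : ENNReal.ofReal β < 1 := by
    rw [← ENNReal.ofReal_one]
    exact ENNReal.ofReal_lt_ofReal_iff_of_nonneg hβ.1.le |>.2 hβ.2
  have hbdd : BddBelow S := by
    refine ⟨-C, fun z hz => ?_⟩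
    by_contra h
    push_neg at h
    have huniv : {ω | z < X ω} = Set.univ := by
      ext ω; simp only [Set.mem_setOf_eq, Set.mem_univ, iff_true]
      linarith [(abs_le.1 (hC ω)).1]
    rw [hS, Set.mem_setOf_eq, huniv, measure_univ] at hz
    exact absurd hz (not_le.2 hβlt)
  set z := sInf S with hz
  refine ⟨z, ?_, ?_⟩
  · -- right continuity
    have hun : {ω | z < X ω} = ⋃ n : ℕ, {ω | z + 1/(n+1) < X ω} := by
      ext ω
      simp only [Set.mem_setOf_eq, Set.mem_iUnion]
      constructor
      · intro h
        obtain ⟨n, hn⟩ := exists_nat_one_div_lt (show 0 < X ω - z by linarith)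
        exact ⟨n, by push_cast at hn ⊢; linarith⟩
      · rintro ⟨n, hn⟩
        have : (0:ℝ) < 1/(n+1) := by positivity
        linarith
    rw [hun]
    rw [Monotone.measure_iUnion ?mono]
    case mono =>
      intro m n h ω hω
      simp only [Set.mem_setOf_eq] at hω ⊢
      have hmn : (m:ℝ) ≤ (n:ℝ) := Nat.cast_le.2 h
      have : (1:ℝ)/(n+1) ≤ 1/(m+1) := by
        apply one_div_le_one_div_of_le (by positivity); linarith
      linarith
    refine iSup_le fun n => ?_
    obtain ⟨x, hxS, hxlt⟩ := csInf_lt_iff hbdd hSne |>.1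
      (lt_add_of_pos_right _ (show (0:ℝ) < 1/(n+1) by positivity))
    refine le_trans (measure_mono fun ω hω => ?_) hxS
    simp only [Set.mem_setOf_eq] at hω ⊢
    linarith
  · -- left limit
    have hin : {ω | z ≤ X ω} = ⋂ n : ℕ, {ω | z - 1/(n+1) < X ω} := by
      ext ω
      simp only [Set.mem_setOf_eq, Set.mem_iInter]
      constructor
      · intro h n
        have : (0:ℝ) < 1/(n+1) := by positivity
        linarith
      · intro h
        by_contra hc
        push_neg at hc
        obtain ⟨n, hn⟩ := exists_nat_one_div_lt (show 0 < z - X ω by linarith)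
        have := h n
        push_cast at hn
        linarith
    rw [hin]
    rw [Antitone.measure_iInter ?anti
      (fun n => (measurableSet_lt measurable_const hX).nullMeasurableSet)
      ⟨0, measure_ne_top _ _⟩]
    case anti =>
      intro m n h ω hω
      simp only [Set.mem_setOf_eq] at hω ⊢
      have hmn : (m:ℝ) ≤ (n:ℝ) := Nat.cast_le.2 h
      have : (1:ℝ)/(n+1) ≤ 1/(m+1) := by
        apply one_div_le_one_div_of_le (by positivity); linarith
      linarith
    refine le_iInf fun n => ?_
    have hnot : z - 1/(n+1) ∉ S := fun hmem => by
      have h1 := csInf_le hbdd hmem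
      have : (0:ℝ) < 1/(n+1) := by positivity
      rw [← hz] at h1
      linarith
    rw [hS, Set.mem_setOf_eq, not_le] at hnot
    exact hnot.le

end Quantile

section Helpers2
open scoped ENNReal
variable {Ω : Type*} [MeasurableSpace Ω]

/-- CVaR lower bound: `CVaR ≥ E[X]`, giving BddBelow. -/
lemma cvar_bddBelow (P : Measure Ω) [IsProbabilityMeasure P]
    {X : Ω → ℝ} (hX : Measurable X) {C : ℝ} (hC : ∀ ω, |X ω| ≤ C)
    {β : ℝ} (hβ : β ∈ Set.Ioo (0:ℝ) 1) (z : ℝ) :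
    ∫ ω, X ω ∂P ≤ z + (∫ ω, max (X ω - z) 0 ∂P) / β := by
  have hint : Integrable X P := bdd_integrable hX hC
  have hintm := max_integrable hX hC (μ := P) z
  have h1 : ∫ ω, (X ω - z) ∂P ≤ ∫ ω, max (X ω - z) 0 ∂P :=
    integral_mono (hint.sub (integrable_const z)) hintm (fun ω => le_max_left _ _)
  have h2 : (0:ℝ) ≤ ∫ ω, max (X ω - z) 0 ∂P :=
    integral_nonneg (fun ω => le_max_right _ _)
  have h3 : ∫ ω, (X ω - z) ∂P = (∫ ω, X ω ∂P) - z := by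
    rw [integral_sub hint (integrable_const z), integral_const]
    simp
  rcases le_total (∫ ω, X ω ∂P) z with h | h
  · have : 0 ≤ (∫ ω, max (X ω - z) 0 ∂P) / β := div_nonneg h2 hβ.1.le
    linarith
  · have hb1 : (∫ ω, max (X ω - z) 0 ∂P) / 1 ≤ (∫ ω, max (X ω - z) 0 ∂P) / β :=
      div_le_div_of_nonneg_left h2 hβ.1 hβ.2.le
    rw [div_one] at hb1
    linarith

/-- At a `β`-quantile `z`, the CVaR infimum is attained. -/
lemma cvar_eq_at_quantile (P : Measure Ω) [IsProbabilityMeasure P]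
    {X : Ω → ℝ} (hX : Measurable X) {C : ℝ} (hC : ∀ ω, |X ω| ≤ C)
    {β : ℝ} (hβ : β ∈ Set.Ioo (0:ℝ) 1) {zs : ℝ}
    (h1 : P {ω | zs < X ω} ≤ ENNReal.ofReal β)
    (h2 : ENNReal.ofReal β ≤ P {ω | zs ≤ X ω}) :
    CVaR P β X = zs + (∫ ω, max (X ω - zs) 0 ∂P) / β := by
  have hβ0 := hβ.1
  have hmin : ∀ z : ℝ, zs + (∫ ω, max (X ω - zs) 0 ∂P) / β
      ≤ z + (∫ ω, max (X ω - z) 0 ∂P) / β := by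
    intro z
    have hintzs := max_integrable hX hC (μ := P) zs
    have hintz := max_integrable hX hC (μ := P) z
    rcases le_total zs z with hz | hz
    · -- case zs ≤ z
      have hkey : (∫ ω, max (X ω - zs) 0 ∂P) - (∫ ω, max (X ω - z) 0 ∂P) ≤ β * (z - zs) := by
        have hptw : ∀ ω, max (X ω - zs) 0 - max (X ω - z) 0
            ≤ Set.indicator {ω | zs < X ω} (fun _ => z - zs) ω := by
          intro ω
          by_cases hω : zs < X ω
          · rw [Set.indicator_of_mem (show ω ∈ {ω | zs < X ω} from hω)]
            rcases le_total (X ω - z) 0 with h | h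
            · rw [max_eq_right h, max_eq_left (by linarith)]; linarith
            · rw [max_eq_left h, max_eq_left (by linarith)]; linarith
          · rw [Set.indicator_of_notMem (show ω ∉ {ω | zs < X ω} from hω)]
            push_neg at hω
            rw [max_eq_right (by linarith)]
            have : (0:ℝ) ≤ max (X ω - z) 0 := le_max_right _ _
            linarith
        have hintind : Integrable (Set.indicator {ω | zs < X ω} (fun _ => z - zs)) P :=
          (integrable_const (z - zs)).indicator (measurableSet_lt measurable_const hX)
        have := integral_mono (hintzs.sub hintz) hintind hptw
        simp only [Pi.sub_apply] at this
        rw [integral_sub hintzs hintz, integral_indicator_const _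
          (measurableSet_lt measurable_const hX)] at this
        have hle : (P {ω | zs < X ω}).toReal ≤ β :=
          ENNReal.toReal_le_of_le_ofReal hβ.1.le h1
        have h0 : (0:ℝ) ≤ z - zs := by linarith
        calc (∫ ω, max (X ω - zs) 0 ∂P) - (∫ ω, max (X ω - z) 0 ∂P)
            ≤ (P {ω | zs < X ω}).toReal • (z - zs) := this
          _ = (P {ω | zs < X ω}).toReal * (z - zs) := smul_eq_mul _ _
          _ ≤ β * (z - zs) := mul_le_mul_of_nonneg_right hle h0
      have hdiv : ((∫ ω, max (X ω - zs) 0 ∂P) - (∫ ω, max (X ω - z) 0 ∂P)) / β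
          ≤ (β * (z - zs)) / β := by gcongr
      rw [mul_div_cancel_left₀ _ (ne_of_gt hβ0), sub_div] at hdiv
      linarith
    · -- case z ≤ zs
      have hkey : β * (zs - z) ≤ (∫ ω, max (X ω - z) 0 ∂P) - (∫ ω, max (X ω - zs) 0 ∂P) := by
        have hptw : ∀ ω, Set.indicator {ω | zs ≤ X ω} (fun _ => zs - z) ω
            ≤ max (X ω - z) 0 - max (X ω - zs) 0 := by
          intro ω
          by_cases hω : zs ≤ X ω
          · rw [Set.indicator_of_mem (show ω ∈ {ω | zs ≤ X ω} from hω),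
              max_eq_left (show (0:ℝ) ≤ X ω - z by linarith),
              max_eq_left (show (0:ℝ) ≤ X ω - zs by linarith)]
            linarith
          · rw [Set.indicator_of_notMem (show ω ∉ {ω | zs ≤ X ω} from hω)]
            push_neg at hω
            rw [max_eq_right (show X ω - zs ≤ (0:ℝ) by linarith)]
            have : (0:ℝ) ≤ max (X ω - z) 0 := le_max_right _ _
            linarith
        have hintind : Integrable (Set.indicator {ω | zs ≤ X ω} (fun _ => zs - z)) P :=
          (integrable_const (zs - z)).indicator (measurableSet_le measurable_const hX)
        have := integral_mono hintind (hintz.sub hintzs) hptw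
        simp only [Pi.sub_apply] at this
        rw [integral_sub hintz hintzs, integral_indicator_const _
          (measurableSet_le measurable_const hX)] at this
        have hge : β ≤ (P {ω | zs ≤ X ω}).toReal := by
          have := ENNReal.toReal_mono (measure_ne_top P _) h2
          rwa [ENNReal.toReal_ofReal hβ.1.le] at this
        have h0 : (0:ℝ) ≤ zs - z := by linarith
        calc β * (zs - z) ≤ (P {ω | zs ≤ X ω}).toReal * (zs - z) :=
              mul_le_mul_of_nonneg_right hge h0
          _ = (P {ω | zs ≤ X ω}).toReal • (zs - z) := (smul_eq_mul _ _).symm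
          _ ≤ (∫ ω, max (X ω - z) 0 ∂P) - (∫ ω, max (X ω - zs) 0 ∂P) := this
      have hdiv : (β * (zs - z)) / β
          ≤ ((∫ ω, max (X ω - z) 0 ∂P) - (∫ ω, max (X ω - zs) 0 ∂P)) / β :=
        by gcongr
      rw [mul_div_cancel_left₀ _ (ne_of_gt hβ0), sub_div] at hdiv
      linarith
  refine le_antisymm (ciInf_le ?_ zs) (le_ciInf hmin)
  exact ⟨∫ ω, X ω ∂P, fun x ⟨z, hzx⟩ => hzx ▸ cvar_bddBelow P hX hC hβ z⟩

lemma construction (P : Measure Ω) [IsProbabilityMeasure P]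
    {X : Ω → ℝ} (hX : Measurable X) {C : ℝ} (hC : ∀ ω, |X ω| ≤ C)
    {β : ℝ} (hβ : β ∈ Set.Ioo (0:ℝ) 1) {zs : ℝ}
    (h1 : P {ω | zs < X ω} ≤ ENNReal.ofReal β)
    (h2 : ENNReal.ofReal β ≤ P {ω | zs ≤ X ω}) (ωs : Ω) :
    ∃ Q : Measure Ω, ∃ _ : IsProbabilityMeasure Q, tvDist P Q ≤ 1 - β ∧
      ∫ ω, X ω ∂Q = (1 - β) * X ωs + β * (zs + (∫ ω, max (X ω - zs) 0 ∂P) / β) := by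
  have hβ0 := hβ.1
  set β' : ℝ≥0∞ := ENNReal.ofReal β with hβ'
  have hβ'1 : β' ≤ 1 := by
    rw [hβ', ← ENNReal.ofReal_one]
    exact ENNReal.ofReal_le_ofReal hβ.2.le
  have hβ'top : β' ≠ ⊤ := ENNReal.ofReal_ne_top
  have hβ'toReal : β'.toReal = β := ENNReal.toReal_ofReal hβ0.le
  set A : Set Ω := {ω | zs < X ω} with hA_def
  set B : Set Ω := {ω | X ω = zs} with hB_def
  have hA : MeasurableSet A := measurableSet_lt measurable_const hX
  have hB : MeasurableSet B := hX (measurableSet_singleton zs)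
  have hABdisj : Disjoint A B := by
    rw [Set.disjoint_left]
    intro ω hωA hωB
    rw [hA_def, Set.mem_setOf_eq] at hωA
    rw [hB_def, Set.mem_setOf_eq] at hωB
    linarith
  have hunion : {ω | zs ≤ X ω} = A ∪ B := by
    ext ω
    simp only [hA_def, hB_def, Set.mem_setOf_eq, Set.mem_union]
    constructor
    · intro h; rcases lt_or_eq_of_le h with h | h
      · exact Or.inl h
      · exact Or.inr h.symm
    · rintro (h | h) <;> [exact h.le; exact h.ge]
  have hPAB : P {ω | zs ≤ X ω} = P A + P B := by
    rw [hunion, measure_union hABdisj hB]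
  have hPAβ : P A ≤ β' := h1
  have hβPAB : β' ≤ P A + P B := hPAB ▸ h2
  set c : ℝ≥0∞ := (β' - P A) / P B with hc_def
  have hc1 : c ≤ 1 := by
    by_cases hPB : P B = 0
    · have : β' - P A = 0 := by
        rw [tsub_eq_zero_iff_le]
        calc β' ≤ P A + P B := hβPAB
          _ = P A := by rw [hPB, add_zero]
      rw [hc_def, this, ENNReal.zero_div]
      exact zero_le_one
    · rw [hc_def, ENNReal.div_le_iff hPB (measure_ne_top _ _), one_mul, tsub_le_iff_right]
      rwa [add_comm]
  have hctop : c ≠ ⊤ := (hc1.trans_lt ENNReal.one_lt_top).ne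
  have hcPB : c * P B = β' - P A := by
    by_cases hPB : P B = 0
    · have hnum : β' - P A = 0 := by
        rw [tsub_eq_zero_iff_le]
        calc β' ≤ P A + P B := hβPAB
          _ = P A := by rw [hPB, add_zero]
      rw [hPB, mul_zero, hnum]
    · rw [hc_def, ENNReal.div_mul_cancel hPB (measure_ne_top _ _)]
  set ν : Measure Ω := P.restrict A + c • P.restrict B with hν_def
  have hν_univ : ν Set.univ = β' := by
    rw [hν_def, Measure.add_apply, Measure.smul_apply, smul_eq_mul,
      Measure.restrict_apply_univ, Measure.restrict_apply_univ, hcPB,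
      add_tsub_cancel_of_le hPAβ]
  have hν_le : ν ≤ P := by
    rw [Measure.le_iff]
    intro E hE
    rw [hν_def, Measure.add_apply, Measure.smul_apply, smul_eq_mul,
      Measure.restrict_apply hE, Measure.restrict_apply hE]
    calc P (E ∩ A) + c * P (E ∩ B) ≤ P (E ∩ A) + P (E ∩ B) := by
          gcongr
          exact mul_le_of_le_one_left zero_le hc1
      _ = P ((E ∩ A) ∪ (E ∩ B)) := by
          rw [measure_union (hABdisj.mono Set.inter_subset_right Set.inter_subset_right)
            (hE.inter hB)]
      _ ≤ P E := measure_mono (by rw [← Set.inter_union_distrib_left]; exact Set.inter_subset_left)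
  haveI : IsFiniteMeasure ν := MeasureTheory.isFiniteMeasure_of_le P hν_le
  set κ : Measure Ω := ((1:ℝ≥0∞) - β') • Measure.dirac ωs with hκ_def
  have hκ_univ : κ Set.univ = 1 - β' := by
    rw [hκ_def, Measure.smul_apply, smul_eq_mul, Measure.dirac_apply_of_mem (Set.mem_univ ωs),
      mul_one]
  haveI : IsFiniteMeasure κ := by
    constructor
    rw [hκ_univ]
    exact lt_of_le_of_lt (tsub_le_self) ENNReal.one_lt_top
  set Q : Measure Ω := ν + κ with hQ_def
  haveI hQprob : IsProbabilityMeasure Q := by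
    constructor
    rw [hQ_def, Measure.add_apply, hν_univ, hκ_univ, add_tsub_cancel_of_le hβ'1]
  refine ⟨Q, hQprob, ?_, ?_⟩
  · -- tvDist bound
    set ρ : Measure Ω := P - ν with hρ_def
    haveI : IsFiniteMeasure ρ := MeasureTheory.isFiniteMeasure_of_le P Measure.sub_le
    have hρν : ρ + ν = P := Measure.sub_add_cancel_of_le hν_le
    have hsm : P.toSignedMeasure - Q.toSignedMeasure
        = ρ.toSignedMeasure - κ.toSignedMeasure := by
      ext E hE
      rw [VectorMeasure.sub_apply, VectorMeasure.sub_apply,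
        Measure.toSignedMeasure_apply_measurable hE, Measure.toSignedMeasure_apply_measurable hE,
        Measure.toSignedMeasure_apply_measurable hE, Measure.toSignedMeasure_apply_measurable hE]
      have hPE : P E = ρ E + ν E := by rw [← hρν, Measure.add_apply]
      have hQE : Q E = ν E + κ E := by rw [hQ_def, Measure.add_apply]
      simp only [measureReal_def]
      rw [hPE, hQE, ENNReal.toReal_add (measure_ne_top _ _) (measure_ne_top _ _),
        ENNReal.toReal_add (measure_ne_top _ _) (measure_ne_top _ _)]
      ring
    have hρuniv : (ρ Set.univ).toReal = 1 - β := by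
      rw [hρ_def, Measure.sub_apply MeasurableSet.univ hν_le, hν_univ, measure_univ,
        ENNReal.toReal_sub_of_le hβ'1 ENNReal.one_ne_top, ENNReal.toReal_one, hβ'toReal]
    have hκuniv : (κ Set.univ).toReal = 1 - β := by
      rw [hκ_univ, ENNReal.toReal_sub_of_le hβ'1 ENNReal.one_ne_top, ENNReal.toReal_one,
        hβ'toReal]
    have := jordan_bound ρ κ
    rw [hρuniv, hκuniv] at this
    unfold tvDist
    rw [hsm]
    linarith
  · -- integral computation
    have hXsm : StronglyMeasurable X := hX.stronglyMeasurable
    haveI : IsFiniteMeasure (c • P.restrict B) := by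
      constructor
      rw [Measure.smul_apply, smul_eq_mul]
      exact lt_of_le_of_lt (mul_le_of_le_one_left zero_le hc1) (measure_lt_top _ _)
    have hintA : Integrable X (P.restrict A) := bdd_integrable hX hC
    have hintcB : Integrable X (c • P.restrict B) := bdd_integrable hX hC
    have hintν : Integrable X ν := by
      rw [hν_def]; exact hintA.add_measure hintcB
    have hintκ : Integrable X κ := bdd_integrable hX hC
    have hIB : ∫ ω, X ω ∂(P.restrict B) = zs * (P B).toReal := by
      calc ∫ ω, X ω ∂(P.restrict B) = ∫ _ω in B, zs ∂P :=
            setIntegral_congr_fun hB (fun ω hω => hω)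
        _ = (P B).toReal • zs := by rw [setIntegral_const]; rfl
        _ = zs * (P B).toReal := by rw [smul_eq_mul]; ring
    have hIA' : ∫ ω, max (X ω - zs) 0 ∂P = (∫ ω in A, X ω ∂P) - zs * (P A).toReal := by
      have hintmax := max_integrable hX hC (μ := P) zs
      have hdecomp : (∫ ω in A, max (X ω - zs) 0 ∂P) + ∫ ω in Aᶜ, max (X ω - zs) 0 ∂P
          = ∫ ω, max (X ω - zs) 0 ∂P := integral_add_compl hA hintmax
      have h10 : ∫ ω in Aᶜ, max (X ω - zs) 0 ∂P = 0 := by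
        have : ∫ ω in Aᶜ, max (X ω - zs) 0 ∂P = ∫ _ω in Aᶜ, (0:ℝ) ∂P := by
          refine setIntegral_congr_fun hA.compl (fun ω hω => ?_)
          have hω' : ¬ zs < X ω := hω
          push_neg at hω'
          exact max_eq_right (by linarith)
        rw [this, setIntegral_const, smul_zero]
      have h11 : ∫ ω in A, max (X ω - zs) 0 ∂P = ∫ ω in A, (X ω - zs) ∂P := by
        refine setIntegral_congr_fun hA (fun ω hω => ?_)
        have hω' : zs < X ω := hω
        exact max_eq_left (by linarith)
      have h12 : ∫ ω in A, (X ω - zs) ∂P = (∫ ω in A, X ω ∂P) - zs * (P A).toReal := by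
        rw [integral_sub hintA (integrable_const zs), integral_const,
          measureReal_restrict_apply_univ, smul_eq_mul, measureReal_def]
        ring
      rw [← hdecomp, h10, h11, h12]
      ring
    have hcB : c.toReal * (P B).toReal = β - (P A).toReal := by
      rw [← ENNReal.toReal_mul, hcPB, ENNReal.toReal_sub_of_le hPAβ hβ'top, hβ'toReal]
    have h1mb : ((1:ℝ≥0∞) - β').toReal = 1 - β := by
      rw [ENNReal.toReal_sub_of_le hβ'1 ENNReal.one_ne_top, ENNReal.toReal_one, hβ'toReal]
    rw [hQ_def, integral_add_measure hintν hintκ, hν_def,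
      integral_add_measure hintA hintcB, integral_smul_measure, hκ_def,
      integral_smul_measure, integral_dirac' X ωs hXsm, hIB, hIA', h1mb,
      smul_eq_mul, smul_eq_mul]
    have hβI : β * (zs + ((∫ ω in A, X ω ∂P) - zs * (P A).toReal) / β)
        = β * zs + ((∫ ω in A, X ω ∂P) - zs * (P A).toReal) := by
      field_simp
    rw [hβI]
    have hc' : c.toReal * (zs * (P B).toReal) = zs * (β - (P A).toReal) := by
      rw [show c.toReal * (zs * (P B).toReal) = zs * (c.toReal * (P B).toReal) by ring, hcB]
    rw [hc']
    ring_nf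

end Helpers2

/-- The total variation distance-based risk measure satisfies
`TVD_β(X) = (1-β) sup_ω X(ω) + β CVaR_β(X)`. -/
theorem stmt_15 {Ω : Type*} [MeasurableSpace Ω] [Nonempty Ω]
    (P : Measure Ω) [IsProbabilityMeasure P]
    (X : Ω → ℝ) (hX : Measurable X) (hbdd : ∃ C : ℝ, ∀ ω, |X ω| ≤ C)
    {β : ℝ} (hβ : β ∈ Set.Ioo (0 : ℝ) 1) :
    sSup {r : ℝ | ∃ Q : Measure Ω, ∃ _ : IsProbabilityMeasure Q,
        tvDist P Q ≤ 1 - β ∧ r = ∫ ω, X ω ∂Q}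
      = (1 - β) * (⨆ ω, X ω) + β * CVaR P β X := by
  obtain ⟨C, hC⟩ := hbdd
  have hβ0 := hβ.1
  have hβ1 := hβ.2
  set M := ⨆ ω, X ω with hM_def
  have hbddA : BddAbove (Set.range X) := ⟨C, by rintro _ ⟨ω, rfl⟩; exact (abs_le.1 (hC ω)).2⟩
  have hM : ∀ ω, X ω ≤ M := fun ω => le_ciSup hbddA ω
  set S := {r : ℝ | ∃ Q : Measure Ω, ∃ _ : IsProbabilityMeasure Q,
      tvDist P Q ≤ 1 - β ∧ r = ∫ ω, X ω ∂Q} with hS_def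
  -- upper bound for all members
  have hub : ∀ r ∈ S, r ≤ (1 - β) * M + β * CVaR P β X := by
    rintro r ⟨Q, hQprob, htv, rfl⟩
    have hz : ∀ z : ℝ, ∫ ω, X ω ∂Q
        ≤ (1 - β) * M + β * (z + (∫ ω, max (X ω - z) 0 ∂P) / β) := by
      intro z
      have hI0 : (0:ℝ) ≤ ∫ ω, max (X ω - z) 0 ∂P :=
        integral_nonneg fun ω => le_max_right _ _
      have hβz : β * (z + (∫ ω, max (X ω - z) 0 ∂P) / β)
          = β * z + ∫ ω, max (X ω - z) 0 ∂P := by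
        field_simp
      rcases le_total z M with hzM | hzM
      · have hfb : ∀ ω, max (X ω - z) 0 ≤ M - z := fun ω =>
          max_le (by linarith [hM ω]) (by linarith)
        have hf0 : ∀ ω, (0:ℝ) ≤ max (X ω - z) 0 := fun ω => le_max_right _ _
        have key := integral_le_add_tv P Q
          ((hX.sub measurable_const).max measurable_const) (by linarith : (0:ℝ) ≤ M - z) hf0 hfb
        have hXle : ∫ ω, X ω ∂Q ≤ z + ∫ ω, max (X ω - z) 0 ∂Q := by
          have hmono := integral_mono (bdd_integrable hX hC (μ := Q))
            ((integrable_const z).add (max_integrable hX hC z))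
            (fun ω => by
              have : X ω - z ≤ max (X ω - z) 0 := le_max_left _ _
              simp only [Pi.add_apply]
              linarith)
          simp only [Pi.add_apply] at hmono
          rwa [integral_add (integrable_const z) (max_integrable hX hC z), integral_const,
            measureReal_def, measure_univ, ENNReal.toReal_one, one_smul] at hmono
        have hmul : (M - z) * tvDist P Q ≤ (M - z) * (1 - β) :=
          mul_le_mul_of_nonneg_left htv (by linarith)
        simp only [Pi.sub_apply] at key
        linarith
      · have hXleM : ∫ ω, X ω ∂Q ≤ M := by
          have := integral_mono (bdd_integrable hX hC (μ := Q)) (integrable_const M) hM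
          rwa [integral_const, measureReal_def, measure_univ, ENNReal.toReal_one, one_smul] at this
        have : β * M ≤ β * z := mul_le_mul_of_nonneg_left hzM hβ0.le
        linarith
    have hdiv : ∀ z : ℝ, ((∫ ω, X ω ∂Q) - (1 - β) * M) / β
        ≤ z + (∫ ω, max (X ω - z) 0 ∂P) / β := by
      intro z
      rw [div_le_iff₀ hβ0]
      have := hz z
      nlinarith [hz z]
    have hCVaR : ((∫ ω, X ω ∂Q) - (1 - β) * M) / β ≤ CVaR P β X := le_ciInf hdiv
    rw [div_le_iff₀ hβ0] at hCVaR
    nlinarith [hCVaR]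
  have hPmem : (∫ ω, X ω ∂P) ∈ S := by
    refine ⟨P, inferInstance, ?_, rfl⟩
    have : tvDist P P = 0 := by
      unfold tvDist
      rw [sub_self, SignedMeasure.totalVariation_zero]
      simp
    rw [this]; linarith
  have hBdd : BddAbove S := ⟨(1 - β) * M + β * CVaR P β X, hub⟩
  refine le_antisymm (csSup_le ⟨_, hPmem⟩ hub) ?_
  -- lower bound
  obtain ⟨zs, hq1, hq2⟩ := exists_quantile P hX hC hβ
  have hcvar := cvar_eq_at_quantile P hX hC hβ hq1 hq2
  refine le_of_forall_sub_le fun ε hε => ?_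
  obtain ⟨ωs, hωs⟩ : ∃ ω, M - ε < X ω :=
    exists_lt_of_lt_ciSup (show M - ε < ⨆ ω, X ω by rw [← hM_def]; linarith)
  obtain ⟨Q, hQp, htv, hint⟩ := construction P hX hC hβ hq1 hq2 ωs
  have hmem : (∫ ω, X ω ∂Q) ∈ S := ⟨Q, hQp, htv, rfl⟩
  have hlow : (1 - β) * M + β * CVaR P β X - ε ≤ ∫ ω, X ω ∂Q := by
    rw [hint, hcvar]
    have h1 : (1 - β) * (M - ε) ≤ (1 - β) * X ωs :=
      mul_le_mul_of_nonneg_left hωs.le (by linarith)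
    nlinarith [mul_pos hβ0 hε]
  exact hlow.trans (le_csSup hBdd hmem)
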